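/- Let K be an algebraically closed field of characteristic zero and L a finite-dimensional Lie algebra over K whose Killing form is nondegenerate, with H ⊆ L a Cartan subalgebra acting triangularizably on L. Let f : L → K be a linear functional whose 'centralizer' is exactly H, meaning: for y ∈ L one has f(⁅y, x⁆) = 0 for all x ∈ L if and only if y ∈ H. Then for every nonzero root α of H in L, the value of f on the coroot of α is nonzero: f(h_α) ≠ 0. -/

import Mathlib

open LieAlgebra LieModule

/-- Lemma 2.3.2(2): let `L` be a finite-dimensional Lie algebra over an algebraically closed
field `K` of characteristic zero with nondegenerate Killing form, `H` a Cartan subalgebra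
acting triangularizably on `L`, and `f : L → K` a linear functional whose centralizer
(the radical of the form `B_f(x,y) = f ⁅x,y⁆`) is exactly `H`.  Then for every nonzero root
`α` of `H` in `L` the value of `f` on the coroot of `α` is nonzero. -/
theorem regular_functional_nonzero_on_coroot
    (K L : Type*) [Field K] [IsAlgClosed K] [CharZero K]
    [LieRing L] [LieAlgebra K L] [FiniteDimensional K L] [LieAlgebra.IsKilling K L]
    (H : LieSubalgebra K L) [H.IsCartanSubalgebra] [LieModule.IsTriangularizable K H L]
    (f : L →ₗ[K] K)
    (hf : ∀ y : L, (∀ x : L, f ⁅y, x⁆ = 0) ↔ y ∈ H)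
    (α : LieModule.Weight K H L) (hα : α.IsNonZero) :
    f (LieAlgebra.IsKilling.coroot α : L) ≠ 0 := by
  intro hcontra
  -- f vanishes on ⁅H, L⁆
  have hfH : ∀ (h : H) (x : L), f ⁅(h : L), x⁆ = 0 := fun h x ↦ (hf h).mpr h.2 x
  -- f vanishes on any generalized weight space of nonzero weight
  have hvanish : ∀ (χ : H → K), χ ≠ 0 → ∀ z ∈ genWeightSpace L χ, f z = 0 := by
    intro χ hχ z hz
    obtain ⟨h, hh⟩ : ∃ h : H, χ h ≠ 0 := by
      by_contra hcon
      push_neg at hcon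
      exact hχ (funext fun h ↦ hcon h)
    have hz' : ⁅(h : L), z⁆ = χ h • z := IsKilling.lie_eq_smul_of_mem_rootSpace hz h
    have : f (χ h • z) = 0 := by rw [← hz']; exact hfH h z
    rw [map_smul, smul_eq_mul] at this
    exact (mul_eq_zero.mp this).resolve_left hh
  -- f vanishes on the coroot direction
  have hc : α ((IsKilling.cartanEquivDual H).symm α) ≠ 0 :=
    IsKilling.root_apply_cartanEquivDual_symm_ne_zero hα
  have hdual : f (((IsKilling.cartanEquivDual H).symm α : H) : L) = 0 := by
    have h2 : f (((2 • (α ((IsKilling.cartanEquivDual H).symm α))⁻¹ •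
        (IsKilling.cartanEquivDual H).symm α : H) : L)) = 0 := by
      rw [← IsKilling.coroot]; exact hcontra
    have h3 : (((2 • (α ((IsKilling.cartanEquivDual H).symm α))⁻¹ •
        (IsKilling.cartanEquivDual H).symm α : H) : L)) =
        (2 * (α ((IsKilling.cartanEquivDual H).symm α))⁻¹) •
        (((IsKilling.cartanEquivDual H).symm α : H) : L) := by
      push_cast
      rw [two_smul, two_mul, add_smul]
    rw [h3, map_smul, smul_eq_mul, mul_eq_zero] at h2
    rcases h2 with h | h
    · exact absurd h (mul_ne_zero two_ne_zero (inv_ne_zero hc))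
    · exact h
  -- pick a nonzero root vector
  obtain ⟨e, he, he0⟩ := α.exists_ne_zero
  -- show e centralizes f, hence e ∈ H
  have heH : e ∈ H := by
    rw [← hf]
    intro x
    have hx : x ∈ ⨆ χ : H → K, genWeightSpace L χ := by
      rw [iSup_genWeightSpace_eq_top]; trivial
    refine LieSubmodule.iSup_induction (motive := fun x ↦ f ⁅e, x⁆ = 0) _ hx
      (fun χ y hy ↦ ?_) (by simp) (fun y z hy hz ↦ ?_)
    · show f ⁅e, y⁆ = 0
      by_cases hzero : (α : H → K) + χ = 0
      · -- χ = -α : use the Killing form formula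
        have hy' : y ∈ rootSpace H (-(α : H → K)) := by
          rwa [eq_neg_of_add_eq_zero_right hzero] at hy
        rw [IsKilling.lie_eq_killingForm_smul_of_mem_rootSpace_of_mem_rootSpace_neg he hy',
          map_smul, smul_eq_mul, hdual, mul_zero]
      · exact hvanish _ hzero _ (lie_mem_genWeightSpace_of_mem_genWeightSpace he hy)
    · have hy' : f ⁅e, y⁆ = 0 := hy
      have hz' : f ⁅e, z⁆ = 0 := hz
      show f ⁅e, y + z⁆ = 0
      rw [lie_add, map_add, hy', hz', add_zero]
  -- contradiction : a nonzero root vector cannot lie in H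
  obtain ⟨h, hh⟩ : ∃ h : H, α h ≠ 0 := by
    by_contra hcon
    push_neg at hcon
    exact hα (funext fun h ↦ hcon h)
  have habelian : ⁅(h : L), e⁆ = 0 := by
    have h2 : ⁅h, (⟨e, heH⟩ : H)⁆ = 0 := trivial_lie_zero _ _ _ _
    exact congrArg Subtype.val h2
  have hsm : (α h) • e = 0 := by
    rw [← IsKilling.lie_eq_smul_of_mem_rootSpace he h]
    exact habelian
  exact he0 (by simpa [hh] using hsm)
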